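/- Let d ≥ 2, s ∈ (0,1), p ≥ 1. There exists C > 0 depending only on d, s, p such that for all r₁, r₂ > 0 with r₂/Λ ≤ r₁ ≤ Λr₂ (Λ > 1 fixed), ∫_{S^{d-1}} ∫_{S^{d-1}} dσ₁ dσ₂ / |r₁σ₁ − r₂σ₂|^{d+sp} ≥ C / (r₂^{d-1} |r₁ − r₂|^{1+sp}). -/

import Mathlib

set_option maxHeartbeats 1000000

open MeasureTheory ENNReal Set Pointwise
open scoped RealInnerProductSpace

-- positivity and scaling of Hausdorff measure of Euclidean closed balls
lemma euclid_ball_pos (n : ℕ) :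
    ∃ c : ℝ, 0 < c ∧ ∀ t : ℝ, 0 < t →
      ENNReal.ofReal (c * t ^ (n : ℝ)) ≤
        μH[(n : ℝ)] (Metric.closedBall (0 : EuclideanSpace ℝ (Fin n)) t) := by
  set m := μH[(n : ℝ)] (Metric.closedBall (0 : EuclideanSpace ℝ (Fin n)) 1) with hm
  have hmpos : 0 < m := by
    have hL : LipschitzWith 1 (⇑(WithLp.equiv 2 (Fin n → ℝ))) := PiLp.lipschitzWith_ofLp 2 _
    have h1 := hL.hausdorffMeasure_image_le (show (0:ℝ) ≤ (n:ℝ) from Nat.cast_nonneg n)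
      (Metric.ball (0 : EuclideanSpace ℝ (Fin n)) 1)
    simp only [ENNReal.coe_one, ENNReal.one_rpow, one_mul] at h1
    have h2 : (μH[(n : ℝ)] : Measure (Fin n → ℝ)) = volume := by
      have := MeasureTheory.hausdorffMeasure_pi_real (ι := Fin n)
      simpa using this
    have hopen : IsOpen ((⇑(WithLp.equiv 2 (Fin n → ℝ))) ''
        (Metric.ball (0 : EuclideanSpace ℝ (Fin n)) 1)) := by
      have := (PiLp.continuousLinearEquiv 2 ℝ (fun _ : Fin n => ℝ)).toHomeomorph.isOpenMap
      exact this _ Metric.isOpen_ball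
    have hne : ((⇑(WithLp.equiv 2 (Fin n → ℝ))) ''
        (Metric.ball (0 : EuclideanSpace ℝ (Fin n)) 1)).Nonempty :=
      ⟨_, ⟨0, Metric.mem_ball_self one_pos, rfl⟩⟩
    have hvolpos : 0 < μH[(n : ℝ)] ((⇑(WithLp.equiv 2 (Fin n → ℝ))) ''
        (Metric.ball (0 : EuclideanSpace ℝ (Fin n)) 1)) := by
      rw [h2]
      exact hopen.measure_pos volume hne
    have : 0 < μH[(n : ℝ)] (Metric.ball (0 : EuclideanSpace ℝ (Fin n)) 1) := by
      by_contra h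
      push_neg at h
      simp only [le_zero_iff] at h
      rw [h] at h1
      exact absurd (le_antisymm h1 zero_le) hvolpos.ne'
    exact this.trans_le (measure_mono Metric.ball_subset_closedBall)
  refine ⟨(min 1 m).toReal, ?_, ?_⟩
  · have : (0:ℝ≥0∞) < min 1 m := lt_min one_pos hmpos
    exact ENNReal.toReal_pos this.ne' (by simp : min 1 m ≠ ⊤)
  · intro t ht
    have hsmul : Metric.closedBall (0 : EuclideanSpace ℝ (Fin n)) t =
        t • Metric.closedBall (0 : EuclideanSpace ℝ (Fin n)) 1 := by
      rw [smul_closedBall _ _ zero_le_one, smul_zero, Real.norm_eq_abs, abs_of_pos ht, mul_one]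
    rw [hsmul, Measure.hausdorffMeasure_smul₀ (Nat.cast_nonneg n) ht.ne' _]
    rw [ENNReal.ofReal_mul (ENNReal.toReal_nonneg), mul_comm]
    have h1 : ENNReal.ofReal (t ^ (n:ℝ)) = (‖t‖₊ : ℝ≥0∞) ^ (n:ℝ) := by
      rw [← ENNReal.ofReal_rpow_of_pos ht]
      congr 1
      rw [← Real.enorm_eq_ofReal ht.le, enorm_eq_nnnorm]
    have h2 : ENNReal.ofReal (min 1 m).toReal ≤ m := by
      rw [ENNReal.ofReal_toReal (by simp : min 1 m ≠ ⊤)]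
      exact min_le_right _ _
    rw [h1]
    rw [ENNReal.smul_def, smul_eq_mul]
    gcongr
    rw [← ENNReal.coe_rpow_of_nonneg _ (by positivity)]

lemma cap_bound (d : ℕ) (hd : 2 ≤ d) :
    ∃ c : ℝ, 0 < c ∧ ∀ σ ∈ Metric.sphere (0 : EuclideanSpace ℝ (Fin d)) 1,
      ∀ t : ℝ, 0 < t → t ≤ 1 →
      ENNReal.ofReal (c * t ^ ((d:ℝ)-1)) ≤
        μH[(d:ℝ)-1] (Metric.sphere (0 : EuclideanSpace ℝ (Fin d)) 1 ∩ Metric.closedBall σ t) := by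
  obtain ⟨c, hc0, hcball⟩ := euclid_ball_pos (d-1)
  have hcast : ((d - 1 : ℕ) : ℝ) = (d:ℝ) - 1 := by
    have h1 : 1 ≤ d := by omega
    push_cast [Nat.cast_sub h1]
    ring
  rw [hcast] at hcball
  refine ⟨c / 2 ^ ((d:ℝ)-1), by positivity, ?_⟩
  intro σ hσmem t ht ht1
  have hσ : ‖σ‖ = 1 := by simpa using hσmem
  have hσ0 : σ ≠ 0 := by intro h; rw [h, norm_zero] at hσ; norm_num at hσ
  set K : Submodule ℝ (EuclideanSpace ℝ (Fin d)) := (ℝ ∙ σ)ᗮ with hK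
  have hrank : Module.finrank ℝ K = d - 1 := by
    have h1 : Module.finrank ℝ (ℝ ∙ σ) = 1 := finrank_span_singleton hσ0
    have h2 := Submodule.finrank_add_finrank_orthogonal (K := (ℝ ∙ σ))
    rw [h1, finrank_euclideanSpace_fin] at h2
    rw [← hK] at h2
    omega
  set B : OrthonormalBasis (Fin (d-1)) ℝ K :=
    (stdOrthonormalBasis ℝ K).reindex (finCongr hrank) with hB
  set P : EuclideanSpace ℝ (Fin d) → EuclideanSpace ℝ (Fin (d-1)) :=
    fun x => B.repr (K.orthogonalProjection x) with hP
  have hPlip : LipschitzWith 1 P := by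
    have h1 : LipschitzWith ‖(K.orthogonalProjection : EuclideanSpace ℝ (Fin d) →L[ℝ] K)‖₊
        (K.orthogonalProjection) := (K.orthogonalProjection).lipschitz
    have h2 : ‖(K.orthogonalProjection : EuclideanSpace ℝ (Fin d) →L[ℝ] K)‖₊ ≤ 1 := by
      rw [← NNReal.coe_le_coe]
      exact Submodule.orthogonalProjection_norm_le K
    have h3 := h1.weaken h2
    have h4 := B.repr.isometry.lipschitz
    have h5 := h4.comp h3
    rw [mul_one] at h5
    exact h5
  have hsubset : Metric.closedBall (0 : EuclideanSpace ℝ (Fin (d-1))) (t/2) ⊆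
      P '' (Metric.sphere (0 : EuclideanSpace ℝ (Fin d)) 1 ∩ Metric.closedBall σ t) := by
    intro y hy
    rw [Metric.mem_closedBall, dist_zero_right] at hy
    have hynorm : ‖y‖ ≤ t/2 := hy
    have hu1 : ‖y‖^2 ≤ 1 := by nlinarith [norm_nonneg y]
    set a : ℝ := Real.sqrt (1 - ‖y‖^2) with ha
    have ha0 : 0 ≤ a := Real.sqrt_nonneg _
    have ha2 : a^2 = 1 - ‖y‖^2 := Real.sq_sqrt (by linarith)
    have ha1 : a ≤ 1 := by nlinarith
    have h1a : 1 - a ≤ ‖y‖^2 := by nlinarith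
    set k : EuclideanSpace ℝ (Fin d) := ((B.repr.symm y : K) : EuclideanSpace ℝ (Fin d)) with hk
    have hkK : k ∈ K := (B.repr.symm y).2
    have hknorm : ‖k‖ = ‖y‖ := by
      rw [hk]
      rw [Submodule.norm_coe]
      exact B.repr.symm.norm_map y
    have hinner : (inner ℝ k σ : ℝ) = 0 :=
      Submodule.mem_orthogonal_singleton_iff_inner_left.mp hkK
    have expand : ∀ b : ℝ, ‖k + b • σ‖^2 = ‖y‖^2 + b^2 := by
      intro b
      rw [norm_add_sq_real, real_inner_smul_right, hinner, norm_smul, hσ, hknorm]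
      simp [Real.norm_eq_abs, mul_one, sq_abs]
    have hxs : (k + a • σ) ∈ Metric.sphere (0 : EuclideanSpace ℝ (Fin d)) 1 := by
      rw [mem_sphere_zero_iff_norm]
      have h2 : ‖k + a • σ‖^2 = 1 := by rw [expand a, ha2]; ring
      have h3 := congrArg Real.sqrt h2
      rwa [Real.sqrt_sq (norm_nonneg _), Real.sqrt_one] at h3
    have hxb : (k + a • σ) ∈ Metric.closedBall σ t := by
      rw [Metric.mem_closedBall, dist_eq_norm]
      have hxσ : k + a • σ - σ = k + (a - 1) • σ := by
        rw [sub_smul, one_smul]; abel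
      rw [hxσ]
      have h := expand (a - 1)
      have hy0 := norm_nonneg y
      have hsq : ‖k + (a - 1) • σ‖^2 ≤ t^2 := by rw [h]; nlinarith
      have h3 : ‖k + (a - 1) • σ‖ ≤ t := by
        have h4 := Real.sqrt_le_sqrt hsq
        rwa [Real.sqrt_sq (norm_nonneg _), Real.sqrt_sq ht.le] at h4
      exact h3
    refine ⟨k + a • σ, ⟨hxs, hxb⟩, ?_⟩
    have hprojk : K.orthogonalProjection k = B.repr.symm y :=
      Submodule.orthogonalProjection_mem_subspace_eq_self (B.repr.symm y)
    have hprojσ : K.orthogonalProjection σ = 0 :=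
      Submodule.orthogonalProjection_orthogonalComplement_singleton_eq_zero σ
    show B.repr (K.orthogonalProjection (k + a • σ)) = y
    have hproj : K.orthogonalProjection (k + a • σ) = B.repr.symm y := by
      rw [_root_.map_add, ContinuousLinearMap.map_smul, hprojk, hprojσ, smul_zero, add_zero]
    rw [hproj, LinearIsometryEquiv.apply_symm_apply]
  have hmeas : ENNReal.ofReal (c * (t/2) ^ ((d:ℝ)-1)) ≤
      μH[(d:ℝ)-1] (Metric.sphere (0 : EuclideanSpace ℝ (Fin d)) 1 ∩ Metric.closedBall σ t) := by
    calc ENNReal.ofReal (c * (t/2) ^ ((d:ℝ)-1))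
        ≤ μH[(d:ℝ)-1] (Metric.closedBall (0 : EuclideanSpace ℝ (Fin (d-1))) (t/2)) :=
          hcball (t/2) (by linarith)
      _ ≤ μH[(d:ℝ)-1] (P '' (Metric.sphere (0 : EuclideanSpace ℝ (Fin d)) 1 ∩
            Metric.closedBall σ t)) := measure_mono hsubset
      _ ≤ μH[(d:ℝ)-1] (Metric.sphere (0 : EuclideanSpace ℝ (Fin d)) 1 ∩
            Metric.closedBall σ t) := by
          have := hPlip.hausdorffMeasure_image_le
            (show (0:ℝ) ≤ (d:ℝ)-1 by
              have : (2:ℝ) ≤ (d:ℝ) := by exact_mod_cast hd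
              linarith)
            (Metric.sphere (0 : EuclideanSpace ℝ (Fin d)) 1 ∩ Metric.closedBall σ t)
          simpa using this
  refine le_trans (le_of_eq ?_) hmeas
  congr 1
  rw [Real.div_rpow ht.le (by norm_num : (0:ℝ) ≤ 2)]
  field_simp

theorem sphere_double_integral_lower_bound
    (d : ℕ) (s p : ℝ) (hd : 2 ≤ d) (hs : 0 < s) (hs1 : s < 1) (hp : 1 ≤ p)
    (Λ : ℝ) (hΛ : 1 < Λ) :
    ∃ C > (0 : ℝ), ∀ r₁ r₂ : ℝ, 0 < r₁ → 0 < r₂ →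
      r₂ / Λ ≤ r₁ → r₁ ≤ Λ * r₂ →
      ENNReal.ofReal (C / (r₂ ^ ((d : ℝ) - 1) * |r₁ - r₂| ^ (1 + s * p))) ≤
        ∫⁻ σ₁ in Metric.sphere (0 : EuclideanSpace ℝ (Fin d)) 1,
          ∫⁻ σ₂ in Metric.sphere (0 : EuclideanSpace ℝ (Fin d)) 1,
            ENNReal.ofReal (1 / ‖r₁ • σ₁ - r₂ • σ₂‖ ^ ((d : ℝ) + s * p))
          ∂(μH[(d : ℝ) - 1]) ∂(μH[(d : ℝ) - 1]) := by
  obtain ⟨c, hc0, hcap⟩ := cap_bound d hd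
  have hΛ0 : (0:ℝ) < Λ := by linarith
  set A : ℝ := (d:ℝ) - 1 with hA
  set q : ℝ := (d:ℝ) + s * p with hq
  have hA0 : 0 ≤ A := by
    have : (2:ℝ) ≤ (d:ℝ) := by exact_mod_cast hd
    simp only [hA]; linarith
  have hq0 : 0 < q := by
    have : (2:ℝ) ≤ (d:ℝ) := by exact_mod_cast hd
    have := mul_pos hs (lt_of_lt_of_le one_pos hp)
    simp only [hq]; linarith
  refine ⟨c^2 / (Λ ^ A * 2 ^ q), by positivity, ?_⟩
  intro r₁ r₂ hr₁ hr₂ hl1 hl2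
  by_cases hδ0 : r₁ = r₂
  · have h0 : (1:ℝ) + s * p ≠ 0 := by positivity
    simp only [hδ0, sub_self, abs_zero, Real.zero_rpow h0, mul_zero, _root_.div_zero,
      ENNReal.ofReal_zero]
    exact zero_le
  set δ : ℝ := |r₁ - r₂| with hδ
  have hδpos : 0 < δ := abs_pos.mpr (sub_ne_zero.mpr hδ0)
  set t : ℝ := δ / (Λ * r₂) with htdef
  have ht : 0 < t := by positivity
  have ht1 : t ≤ 1 := by
    rw [div_le_one (by positivity)]
    rw [hδ, abs_le]
    constructor <;> nlinarith [div_le_iff₀ hΛ0 |>.mp hl1]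
  set S := Metric.sphere (0 : EuclideanSpace ℝ (Fin d)) 1 with hS
  have hSmeas : MeasurableSet S := Metric.isClosed_sphere.measurableSet
  -- the inner bound
  set I : ℝ≥0∞ := ENNReal.ofReal (1 / (2*δ)^q * (c * t ^ A)) with hI
  have inner_bound : ∀ σ₁ ∈ S,
      I ≤ ∫⁻ σ₂ in S, ENNReal.ofReal (1 / ‖r₁ • σ₁ - r₂ • σ₂‖ ^ q) ∂(μH[A]) := by
    intro σ₁ hσ₁
    have hσ₁n : ‖σ₁‖ = 1 := by simpa [hS] using hσ₁
    set cap := S ∩ Metric.closedBall σ₁ t with hcapdef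
    have hcapmeas : MeasurableSet cap :=
      (Metric.isClosed_sphere.inter Metric.isClosed_closedBall).measurableSet
    have hpt : ∀ σ₂ ∈ cap,
        ENNReal.ofReal (1 / (2*δ)^q) ≤ ENNReal.ofReal (1 / ‖r₁ • σ₁ - r₂ • σ₂‖ ^ q) := by
      intro σ₂ hσ₂
      obtain ⟨hσ₂S, hσ₂b⟩ := hσ₂
      have hσ₂n : ‖σ₂‖ = 1 := by simpa [hS] using hσ₂S
      have hub : ‖r₁ • σ₁ - r₂ • σ₂‖ ≤ 2 * δ := by
        have hsplit : r₁ • σ₁ - r₂ • σ₂ = (r₁ - r₂) • σ₁ + r₂ • (σ₁ - σ₂) := by module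
        have hdist : ‖σ₁ - σ₂‖ ≤ t := by
          rw [← dist_eq_norm, dist_comm]
          exact hσ₂b
        have h1 : ‖r₁ • σ₁ - r₂ • σ₂‖ ≤ ‖(r₁ - r₂) • σ₁‖ + ‖r₂ • (σ₁ - σ₂)‖ := by
          rw [hsplit]; exact norm_add_le _ _
        have h2 : ‖(r₁ - r₂) • σ₁‖ = δ := by
          rw [norm_smul, hσ₁n, Real.norm_eq_abs, mul_one]
        have h3 : ‖r₂ • (σ₁ - σ₂)‖ ≤ r₂ * t := by
          rw [norm_smul, Real.norm_eq_abs, abs_of_pos hr₂]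
          exact mul_le_mul_of_nonneg_left hdist hr₂.le
        have h4 : r₂ * t = δ / Λ := by
          rw [htdef]; field_simp
        have h5 : δ / Λ ≤ δ := by
          rw [div_le_iff₀ hΛ0]; nlinarith
        linarith
      have hlb : δ ≤ ‖r₁ • σ₁ - r₂ • σ₂‖ := by
        have h1 := abs_norm_sub_norm_le (r₁ • σ₁) (r₂ • σ₂)
        rw [norm_smul, norm_smul, hσ₁n, hσ₂n, Real.norm_eq_abs, Real.norm_eq_abs,
          mul_one, mul_one, abs_of_pos hr₁, abs_of_pos hr₂] at h1
        exact le_trans (le_of_eq rfl) h1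
      apply ENNReal.ofReal_le_ofReal
      apply one_div_le_one_div_of_le
      · exact Real.rpow_pos_of_pos (lt_of_lt_of_le hδpos hlb) q
      · exact Real.rpow_le_rpow (by linarith) hub hq0.le
    calc I = ENNReal.ofReal (1 / (2*δ)^q) * ENNReal.ofReal (c * t ^ A) := by
          rw [hI, ENNReal.ofReal_mul (by positivity)]
      _ ≤ ENNReal.ofReal (1 / (2*δ)^q) * μH[A] cap :=
          mul_le_mul_right (hcap σ₁ hσ₁ t ht ht1) _
      _ = ∫⁻ _ in cap, ENNReal.ofReal (1 / (2*δ)^q) ∂(μH[A]) := (setLIntegral_const _ _).symm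
      _ ≤ ∫⁻ σ₂ in cap, ENNReal.ofReal (1 / ‖r₁ • σ₁ - r₂ • σ₂‖ ^ q) ∂(μH[A]) :=
          setLIntegral_mono' hcapmeas hpt
      _ ≤ ∫⁻ σ₂ in S, ENNReal.ofReal (1 / ‖r₁ • σ₁ - r₂ • σ₂‖ ^ q) ∂(μH[A]) :=
          lintegral_mono' (Measure.restrict_mono inter_subset_left le_rfl) le_rfl
  -- the sphere has measure at least ofReal c
  have hSph : ENNReal.ofReal c ≤ μH[A] S := by
    have hne : Nonempty (Fin d) := ⟨⟨0, by omega⟩⟩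
    set e : EuclideanSpace ℝ (Fin d) := EuclideanSpace.single (Classical.arbitrary (Fin d)) (1:ℝ)
      with he
    have heS : e ∈ S := by
      rw [hS, mem_sphere_zero_iff_norm, he, EuclideanSpace.norm_single]
      norm_num
    have := hcap e heS 1 one_pos le_rfl
    rw [Real.one_rpow, mul_one] at this
    exact le_trans this (measure_mono inter_subset_left)
  -- combine
  have houter : I * ENNReal.ofReal c ≤
      ∫⁻ σ₁ in S, ∫⁻ σ₂ in S,
        ENNReal.ofReal (1 / ‖r₁ • σ₁ - r₂ • σ₂‖ ^ q) ∂(μH[A]) ∂(μH[A]) := by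
    calc I * ENNReal.ofReal c ≤ I * μH[A] S := mul_le_mul_right hSph _
      _ = ∫⁻ _ in S, I ∂(μH[A]) := (setLIntegral_const _ _).symm
      _ ≤ _ := setLIntegral_mono' hSmeas inner_bound
  refine le_trans ?_ houter
  rw [hI, ← ENNReal.ofReal_mul (by positivity)]
  apply ENNReal.ofReal_le_ofReal
  apply le_of_eq
  have h2δ : (2*δ)^q = 2^q * δ^q := Real.mul_rpow (by norm_num) hδpos.le
  have htA : t ^ A = δ^A / (Λ^A * r₂^A) := by
    rw [htdef, Real.div_rpow hδpos.le (by positivity), Real.mul_rpow hΛ0.le hr₂.le]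
  have hδsplit : δ^q = δ^A * δ^(1 + s*p) := by
    rw [← Real.rpow_add hδpos]
    congr 1
    rw [hq, hA]; ring
  rw [h2δ, htA, hδsplit]
  have b1 : (0:ℝ) < Λ^A := by positivity
  have b2 : (0:ℝ) < 2^q := by positivity
  have b3 : (0:ℝ) < r₂^A := by positivity
  have b4 : (0:ℝ) < δ^A := by positivity
  have b5 : (0:ℝ) < δ^(1+s*p) := by positivity
  field_simp
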